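/- arXiv:2512.16414 — 2 statements merged into one kernel-verified Lean document; each statement's English description precedes it below -/
import Mathlib

section
/- Let P be a preference profile, let w ∈ RV^PUT(P) be a River PUT winner, and let e_defeat = (x,w) be an edge of the margin graph M(P) incoming to w. Then for every descending linear ordering o ∈ O↓ with w ∈ RV(o,P), there is a path from w to x in the River diagram M^RV(o) whose strength is at least m_P(x,w). -/
attribute [local instance] Classical.propDecidable

/-- A preference profile: each of `m` voters has a strict linear (total) preference
relation over the alternatives `A`. -/
structure Profile (A : Type*) (m : ℕ) where
  pref : Fin m → A → A → Prop
  strict : ∀ i, IsStrictTotalOrder A (pref i)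

/-- The majority margin of `x` over `y`: the number of voters preferring `x` to `y`
minus the number of voters preferring `y` to `x`. -/
noncomputable def margin {A : Type*} [Fintype A] {m : ℕ} (P : Profile A m) (x y : A) : ℤ :=
  ((Finset.univ.filter fun i => P.pref i x y).card : ℤ) -
    ((Finset.univ.filter fun i => P.pref i y x).card : ℤ)

/-- The majority margin as a function on (potential) edges. -/
noncomputable def marginE {A : Type*} [Fintype A] {m : ℕ} (P : Profile A m) : A × A → ℤ :=
  fun e => margin P e.1 e.2

/-- The edge set of the margin graph: an edge `(x, y)` between distinct alternatives
whenever the majority margin of `x` over `y` is nonnegative. -/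
noncomputable def marginEdges {A : Type*} [Fintype A] {m : ℕ} (P : Profile A m) :
    Finset (A × A) :=
  Finset.univ.filter fun e => e.1 ≠ e.2 ∧ 0 ≤ margin P e.1 e.2

/-- `l` is a path from `x` to `y` in the digraph with edge set `E`:
a nonempty list of pairwise distinct vertices starting at `x`, ending at `y`,
whose consecutive vertices are joined by edges of `E`. -/
def IsPathFrom {V : Type*} (E : Finset (V × V)) (l : List V) (x y : V) : Prop :=
  l ≠ [] ∧ l.Nodup ∧ l.head? = some x ∧ l.getLast? = some y ∧
    l.Chain' fun a b => (a, b) ∈ E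

/-- There is a path from `x` to `y` in the digraph with edge set `E`. -/
def Reach {V : Type*} (E : Finset (V × V)) (x y : V) : Prop :=
  ∃ l, IsPathFrom E l x y

/-- The digraph with edge set `E` contains a directed cycle. -/
def HasCycle {V : Type*} (E : Finset (V × V)) : Prop :=
  ∃ f ∈ E, Reach E f.2 f.1

/-- `T` is a tree rooted at `r`: there is a unique path from `r` to every vertex,
no edge enters the root, and every vertex has at most one incoming edge. -/
def IsRootedTree {V : Type*} (T : Finset (V × V)) (r : V) : Prop :=
  (∀ v : V, ∃! l : List V, IsPathFrom T l r v) ∧ (∀ e ∈ T, e.2 ≠ r) ∧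
    ∀ e f, e ∈ T → f ∈ T → e.2 = f.2 → e = f

/-- `a` has no incoming edge in `D`. -/
def noIncoming {V : Type*} (D : Finset (V × V)) (a : V) : Prop :=
  ∀ e ∈ D, e.2 ≠ a

/-- `o` is a descending linear ordering of the edge set `E` with respect to the
margin function `marg`: an enumeration of `E` without repetition in which edges of
larger margin come before edges of smaller margin. -/
def IsDescOrdering {V : Type*} (marg : V × V → ℤ) (E : Finset (V × V))
    (o : List (V × V)) : Prop :=
  o.Nodup ∧ (∀ e, e ∈ o ↔ e ∈ E) ∧ o.Pairwise fun e f => marg f ≤ marg e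

/-- One step of the River procedure: add `e = (x, y)` to the current diagram `D` unless
(R1) `y` already has an incoming edge in `D`, or (R2) there is a path from `y` to `x`
in `D`. -/
noncomputable def riverStep {V : Type*} (D : Finset (V × V)) (e : V × V) :
    Finset (V × V) :=
  if (∃ f ∈ D, f.2 = e.2) ∨ Reach D e.2 e.1 then D else insert e D

/-- The River diagram obtained by processing the edges in the order `o`,
starting from the empty diagram. -/
noncomputable def riverFold {V : Type*} (o : List (V × V)) : Finset (V × V) :=
  o.foldl riverStep ∅

/-- One step of the semi-River process with margin function `marg`: add `e = (x, y)` to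
the current diagram `D` unless
(sR1) there is another incoming edge `e' = (z, y)` of `y` among the included edges of
margin strictly greater than `marg e` such that there is no path from `y` to `z` among
the included edges of margin at least `marg e'`, or
(sR2) within the included edges of strictly greater margin, the set of vertices having
a path to `x` avoiding all incoming edges of `y` induces an acyclic subgraph in which
`y` is the only vertex with no incoming edge. -/
noncomputable def semiRiverStep {V : Type*} (marg : V × V → ℤ) (D : Finset (V × V))
    (e : V × V) : Finset (V × V) :=
  let Sgt := D.filter fun f => marg e < marg f
  let sR1 : Prop := ∃ f ∈ Sgt, f.2 = e.2 ∧
      ¬ Reach (D.filter fun g => marg f ≤ marg g) e.2 f.1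
  let Anc : Set V := {v | Reach (Sgt.filter fun g => g.2 ≠ e.2) v e.1}
  let ind := Sgt.filter fun g => g.1 ∈ Anc ∧ g.2 ∈ Anc
  let sR2 : Prop := e.2 ∈ Anc ∧ ¬ HasCycle ind ∧
      ∀ v ∈ Anc, ((∀ g ∈ ind, g.2 ≠ v) ↔ v = e.2)
  if sR1 ∨ sR2 then D else insert e D

/-- The semi-River diagram obtained by processing the edges in the order `o`,
starting from the empty diagram. -/
noncomputable def semiRiverFold {V : Type*} (marg : V × V → ℤ) (o : List (V × V)) :
    Finset (V × V) :=
  o.foldl (semiRiverStep marg) ∅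

/-- The runs of the directed Prim algorithm on the digraph with edge set `E`, weight
function `w`, and start vertex `s`: `PrimRun E w s S T` holds if after some number of
steps the set of explored vertices is `S` and the collected tree edges are `T`; at each
step an arbitrary crossing edge of maximum weight is selected. -/
inductive PrimRun {V : Type*} {β : Type*} [LinearOrder β] (E : Finset (V × V))
    (w : V × V → β) (s : V) : Finset V → Finset (V × V) → Prop
  | init : PrimRun E w s {s} ∅
  | step {S : Finset V} {T : Finset (V × V)} (e : V × V) (he : e ∈ E)
      (h1 : e.1 ∈ S) (h2 : e.2 ∉ S)
      (hmax : ∀ f ∈ E, f.1 ∈ S → f.2 ∉ S → w f ≤ w e)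
      (hrun : PrimRun E w s S T) :
      PrimRun E w s (insert e.2 S) (insert e T)

/-- `T` is a possible output of the directed Prim algorithm on `(E, w)` started at `s`:
it is obtained by a run that has terminated, i.e. no crossing edge remains. -/
def IsPrimOutput {V : Type*} {β : Type*} [LinearOrder β] (E : Finset (V × V))
    (w : V × V → β) (s : V) (T : Finset (V × V)) : Prop :=
  ∃ S : Finset V, PrimRun E w s S T ∧ ∀ f ∈ E, f.1 ∈ S → f.2 ∈ S

/-- The strength of a path (as a list of vertices): the minimum weight of its edges,
`⊤` for a trivial path with no edges. -/
noncomputable def strength {V : Type*} (w : V × V → ℕ) (l : List V) : ℕ∞ :=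
  ((l.zip l.tail).map fun p => (w p : ℕ∞)).foldr min ⊤

/-- `l` is a strongest path from `x` to `y`: it is a path from `x` to `y` and no path
from `x` to `y` has (strictly) greater strength. -/
def IsStrongestPath {V : Type*} (E : Finset (V × V)) (w : V × V → ℕ) (l : List V)
    (x y : V) : Prop :=
  IsPathFrom E l x y ∧ ∀ l', IsPathFrom E l' x y → strength w l' ≤ strength w l

/-- `o` is a descending linear ordering of `E` in which, among edges of equal margin,
edges belonging to `E'` come before edges not belonging to `E'`. -/
def IsSetOrdering {V : Type*} (marg : V × V → ℤ) (E E' : Finset (V × V))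
    (o : List (V × V)) : Prop :=
  o.Nodup ∧ (∀ e, e ∈ o ↔ e ∈ E) ∧
    o.Pairwise fun e f => marg f ≤ marg e ∧ (marg e = marg f → f ∈ E' → e ∈ E')

lemma subset_riverStep {V : Type*} (D : Finset (V × V)) (e : V × V) :
    D ⊆ riverStep D e := by
  unfold riverStep
  split
  · exact subset_rfl
  · exact Finset.subset_insert _ _

lemma subset_foldl_riverStep {V : Type*} (l : List (V × V)) (D : Finset (V × V)) :
    D ⊆ l.foldl riverStep D := by
  induction l generalizing D with
  | nil => exact subset_rfl
  | cons e t ih => exact (subset_riverStep D e).trans (ih _)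

lemma mem_of_mem_foldl_riverStep {V : Type*} (l : List (V × V)) (D : Finset (V × V))
    (a : V × V) (ha : a ∈ l.foldl riverStep D) : a ∈ D ∨ a ∈ l := by
  induction l generalizing D with
  | nil => exact Or.inl ha
  | cons e t ih =>
    rcases ih _ ha with h | h
    · have : a ∈ insert e D := by
        revert h
        unfold riverStep
        split
        · intro h; exact Finset.mem_insert_of_mem h
        · intro h; exact h
      rcases Finset.mem_insert.1 this with h | h
      · exact Or.inr (by simp [h])
      · exact Or.inl h
    · exact Or.inr (List.mem_cons_of_mem _ h)

lemma chain'_zip_mem {V : Type*} (E : Finset (V × V)) :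
    ∀ (l : List V), (l.Chain' fun a b => (a, b) ∈ E) →
      ∀ p ∈ l.zip l.tail, p ∈ E := by
  intro l
  induction l with
  | nil => intro _ p hp; simp at hp
  | cons a t ih =>
    intro hc p hp
    cases t with
    | nil => simp at hp
    | cons b s =>
      simp only [List.Chain', List.isChain_cons_cons] at hc
      simp only [List.tail_cons, List.zip_cons_cons, List.mem_cons] at hp
      rcases hp with rfl | hp
      · exact hc.1
      · exact ih hc.2 p hp

lemma isPathFrom_mono {V : Type*} {E E' : Finset (V × V)} (h : E ⊆ E')
    {l : List V} {x y : V} (hl : IsPathFrom E l x y) : IsPathFrom E' l x y :=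
  ⟨hl.1, hl.2.1, hl.2.2.1, hl.2.2.2.1, List.IsChain.imp (fun a b hab => h hab) hl.2.2.2.2⟩

/-- Let `w` be a River PUT winner of `P` and let `(x, w)` be an edge of
the margin graph incoming to `w`. Then for every descending linear ordering `o` under
which `w` is a River winner, the River diagram `M^RV(o)` contains a path from `w` to `x`
all of whose edges have margin at least `m_P(x, w)` (i.e. of strength at least
`m_P(x, w)`). -/
theorem put_winner_has_strong_path_in_winning_river_diagram
    {A : Type*} [Fintype A] {m : ℕ} (hm : 1 ≤ m) (hA : 2 ≤ Fintype.card A)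
    (P : Profile A m) (w x : A)
    (hput : ∃ o : List (A × A), IsDescOrdering (marginE P) (marginEdges P) o ∧
      noIncoming (riverFold o) w)
    (hedge : (x, w) ∈ marginEdges P)
    (o : List (A × A)) (ho : IsDescOrdering (marginE P) (marginEdges P) o)
    (hwin : noIncoming (riverFold o) w) :
    ∃ l : List A, IsPathFrom (riverFold o) l w x ∧
      ∀ p ∈ l.zip l.tail, marginE P (x, w) ≤ marginE P p := by
  obtain ⟨hnodup, hmem, hpair⟩ := ho
  have he_o : (x, w) ∈ o := (hmem _).2 hedge
  obtain ⟨o₁, o₂, rfl⟩ := List.append_of_mem he_o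
  set D₁ := riverFold o₁ with hD₁
  have hfold : riverFold (o₁ ++ (x, w) :: o₂)
      = o₂.foldl riverStep (riverStep D₁ (x, w)) := by
    simp only [hD₁, riverFold, List.foldl_append, List.foldl_cons]
  have hsub2 : riverStep D₁ (x, w) ⊆ riverFold (o₁ ++ (x, w) :: o₂) := by
    rw [hfold]; exact subset_foldl_riverStep _ _
  have hsub1 : D₁ ⊆ riverFold (o₁ ++ (x, w) :: o₂) :=
    (subset_riverStep D₁ (x, w)).trans hsub2
  -- the edge (x,w) must have been rejected
  have hcond : (∃ f ∈ D₁, f.2 = (x, w).2) ∨ Reach D₁ (x, w).2 (x, w).1 := by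
    by_contra hc
    have : (x, w) ∈ riverStep D₁ (x, w) := by
      unfold riverStep
      rw [if_neg hc]
      exact Finset.mem_insert_self _ _
    exact hwin _ (hsub2 this) rfl
  rcases hcond with ⟨f, hf, hf2⟩ | ⟨l, hl⟩
  · exact absurd hf2 (hwin f (hsub1 hf))
  · refine ⟨l, isPathFrom_mono hsub1 hl, ?_⟩
    intro p hp
    have hpD : p ∈ D₁ := chain'_zip_mem D₁ l hl.2.2.2.2 p hp
    have hpo₁ : p ∈ o₁ := by
      rcases mem_of_mem_foldl_riverStep o₁ ∅ p hpD with h | h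
      · simp at h
      · exact h
    have := (List.pairwise_append.1 hpair).2.2 p hpo₁ (x, w) (by simp)
    exact this
end

section
/- Let P be a preference profile with semi-River diagram sRV(P). For an alternative y ∈ A and any two incoming edges e = (x,y) and e' = (z,y) of y in sRV(P), if m_P(e) < m_P(e'), then there is a path from y to z in sRV(P) all of whose edges have margin at least m_P(e') (equivalently, a path from y to z of strength at least m_P(e')). -/
attribute [local instance] Classical.propDecidable

private lemma srv_mem_step {V : Type*} (marg : V × V → ℤ) (D : Finset (V × V))
    (e a : V × V) (h : a ∈ semiRiverStep marg D e) : a ∈ D ∨ a = e := by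
  simp only [semiRiverStep] at h
  split_ifs at h
  · exact Or.inl h
  · rcases Finset.mem_insert.mp h with h | h
    · exact Or.inr h
    · exact Or.inl h

private lemma srv_subset_step {V : Type*} (marg : V × V → ℤ) (D : Finset (V × V))
    (e : V × V) : D ⊆ semiRiverStep marg D e := by
  simp only [semiRiverStep]
  split_ifs
  · exact Finset.Subset.refl _
  · exact Finset.subset_insert _ _

private lemma srv_mem_fold {V : Type*} (marg : V × V → ℤ) :
    ∀ (l : List (V × V)) (D : Finset (V × V)) (a : V × V),
      a ∈ List.foldl (semiRiverStep marg) D l → a ∈ D ∨ a ∈ l := by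
  intro l
  induction l with
  | nil => intro D a h; exact Or.inl h
  | cons e t ih =>
    intro D a h
    rcases ih (semiRiverStep marg D e) a h with h' | h'
    · rcases srv_mem_step marg D e a h' with h'' | h''
      · exact Or.inl h''
      · exact Or.inr (by simp [h''])
    · exact Or.inr (List.mem_cons_of_mem _ h')

private lemma srv_subset_fold {V : Type*} (marg : V × V → ℤ) :
    ∀ (l : List (V × V)) (D : Finset (V × V)),
      D ⊆ List.foldl (semiRiverStep marg) D l := by
  intro l
  induction l with
  | nil => intro D; exact Finset.Subset.refl _
  | cons e t ih =>
    intro D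
    exact (srv_subset_step marg D e).trans (ih (semiRiverStep marg D e))

private lemma chain'_zip {V : Type*} {R : V → V → Prop} :
    ∀ {l : List V}, l.Chain' R → ∀ p ∈ l.zip l.tail, R p.1 p.2 := by
  intro l
  induction l with
  | nil => intro _ p hp; simp at hp
  | cons a t ih =>
    intro h p hp
    cases t with
    | nil => simp at hp
    | cons b t' =>
      rcases List.isChain_cons_cons.mp h with ⟨hab, ht⟩
      simp only [List.tail_cons, List.zip_cons_cons, List.mem_cons] at hp
      rcases hp with rfl | hp
      · exact hab
      · exact ih ht p hp

private lemma path_mono {V : Type*} {E' E : Finset (V × V)} {l : List V} {a b : V}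
    (hE : E' ⊆ E) (h : IsPathFrom E' l a b) : IsPathFrom E l a b :=
  ⟨h.1, h.2.1, h.2.2.1, h.2.2.2.1, h.2.2.2.2.imp fun _ _ hab => hE hab⟩

/-- For an alternative `y` and two incoming edges `e = (x, y)` and
`e' = (z, y)` of `y` in the semi-River diagram `sRV(P)` (computed with any descending
linear ordering `o`), if `m_P(e) < m_P(e')` then there is a path from `y` to `z` in
`sRV(P)` all of whose edges have margin at least `m_P(e')` (equivalently, a path of
strength at least `m_P(e')`). -/
theorem semi_river_path_existence
    {A : Type*} [Fintype A] {m : ℕ} (hm : 1 ≤ m) (hA : 2 ≤ Fintype.card A)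
    (P : Profile A m) (o : List (A × A))
    (ho : IsDescOrdering (marginE P) (marginEdges P) o)
    (x y z : A)
    (he : (x, y) ∈ semiRiverFold (marginE P) o)
    (he' : (z, y) ∈ semiRiverFold (marginE P) o)
    (hlt : marginE P (x, y) < marginE P (z, y)) :
    ∃ l : List A, IsPathFrom (semiRiverFold (marginE P) o) l y z ∧
      ∀ p ∈ l.zip l.tail, marginE P (z, y) ≤ marginE P p := by
  obtain ⟨hnd, hmem, hpair⟩ := ho
  set marg := marginE P with hmarg
  -- (x, y) occurs in o
  have hxo : (x, y) ∈ o := by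
    rcases srv_mem_fold marg o ∅ (x, y) he with h | h
    · simp at h
    · exact h
  obtain ⟨s, t, rfl⟩ := List.append_of_mem hxo
  -- nodup facts
  have hnd' := hnd
  rw [List.nodup_append] at hnd'
  obtain ⟨hnds, hndxt, hdisj⟩ := hnd'
  have hxs : (x, y) ∉ s := fun h => hdisj _ h _ List.mem_cons_self rfl
  have hxt : (x, y) ∉ t := (List.nodup_cons.mp hndxt).1
  -- intermediate diagram
  set D₁ : Finset (A × A) := List.foldl (semiRiverStep marg) ∅ s with hD₁
  have hfold : semiRiverFold marg (s ++ (x, y) :: t) =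
      List.foldl (semiRiverStep marg) (semiRiverStep marg D₁ (x, y)) t := by
    simp [semiRiverFold, List.foldl_append, hD₁]
  have hxD1 : (x, y) ∉ D₁ := by
    intro h
    rcases srv_mem_fold marg s ∅ (x, y) h with h' | h'
    · simp at h'
    · exact hxs h'
  -- (x, y) survives its own step
  have hx_step : (x, y) ∈ semiRiverStep marg D₁ (x, y) := by
    have hx' : (x, y) ∈ List.foldl (semiRiverStep marg)
        (semiRiverStep marg D₁ (x, y)) t := by rw [← hfold]; exact he
    rcases srv_mem_fold marg t _ (x, y) hx' with h | h
    · exact h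
    · exact absurd h hxt
  -- the sR1 condition fails at the step for (x, y)
  have hreach : ∀ f ∈ D₁.filter (fun f => marg (x, y) < marg f), f.2 = y →
      Reach (D₁.filter fun g => marg f ≤ marg g) y f.1 := by
    intro f hf hf2
    by_contra hnr
    have hx' := hx_step
    simp only [semiRiverStep] at hx'
    rw [if_pos (Or.inl ⟨f, hf, hf2, hnr⟩)] at hx'
    exact hxD1 hx'
  -- (z, y) ∈ D₁
  have hzx : (z, y) ≠ (x, y) := by
    intro h
    rw [h] at hlt
    exact lt_irrefl _ hlt
  have hzt : (z, y) ∉ t := by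
    intro h
    have hsub : ((x, y) :: t).Pairwise fun e f => marg f ≤ marg e :=
      hpair.sublist (List.sublist_append_right _ _)
    have := (List.pairwise_cons.mp hsub).1 _ h
    exact absurd hlt (not_lt.mpr this)
  have hzD1 : (z, y) ∈ D₁ := by
    have hz' : (z, y) ∈ List.foldl (semiRiverStep marg)
        (semiRiverStep marg D₁ (x, y)) t := by rw [← hfold]; exact he'
    rcases srv_mem_fold marg t _ (z, y) hz' with h | h
    · rcases srv_mem_step marg D₁ (x, y) (z, y) h with h' | h'
      · exact h'
      · exact absurd h' hzx
    · exact absurd h hzt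
  -- apply hreach to (z, y)
  have hzfilt : (z, y) ∈ D₁.filter fun f => marg (x, y) < marg f :=
    Finset.mem_filter.mpr ⟨hzD1, hlt⟩
  obtain ⟨l, hl⟩ := hreach (z, y) hzfilt rfl
  -- D₁ ⊆ final diagram
  have hD1sub : D₁ ⊆ semiRiverFold marg (s ++ (x, y) :: t) := by
    rw [hfold]
    exact (srv_subset_step marg D₁ (x, y)).trans (srv_subset_fold marg t _)
  have hfsub : (D₁.filter fun g => marg (z, y) ≤ marg g) ⊆
      semiRiverFold marg (s ++ (x, y) :: t) :=
    (Finset.filter_subset _ _).trans hD1sub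
  refine ⟨l, path_mono hfsub hl, ?_⟩
  intro p hp
  have := chain'_zip hl.2.2.2.2 p hp
  exact (Finset.mem_filter.mp this).2
end
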